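/- Let C: u_1,…,u_{2k+1} and C': u'_1,…,u'_{2k'+1} be two vertex-disjoint odd cycles in K_{r_1,…,r_n}, with edges e_i = {u_i, u_{i+1}} (u_{2k+2} := u_1) and e'_i = {u'_i, u'_{i+1}} (u'_{2k'+2} := u'_1), and let q_0 = u_1, q_1, …, q_m = u'_1 be a path in K_{r_1,…,r_n} connecting them (pairwise distinct vertices, consecutive vertices in different blocks, and q_1,…,q_{m−1} lying on neither cycle), with edges f_j = {q_{j−1}, q_j} for j = 1,…,m. Then in ℤ^{d+n}: if m is even, Σ_{i=1}^{2k+1} (−1)^i w_{e_i} − Σ_{i=1}^{2k'+1} (−1)^i w_{e'_i} − 2 Σ_{j=1}^{m} (−1)^j w_{f_j} = 0, and if m is odd, Σ_{i=1}^{2k+1} (−1)^i w_{e_i} + Σ_{i=1}^{2k'+1} (−1)^i w_{e'_i} − 2 Σ_{j=1}^{m} (−1)^j w_{f_j} = 0; in particular, the vectors w_{e_i}, w_{e'_i}, w_{f_j} are linearly dependent. -/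

import Mathlib

/-- The vector `w_e ∈ ℤ^d ⊕ ℤ^n` associated to the edge `e = {a,b}`. -/
def wvec (n d : ℕ) (blk : Fin d → ℕ) (a b : Fin d) : (Fin d → ℤ) × (Fin n → ℤ) :=
  (fun k => (if k = a then 1 else 0) + (if k = b then 1 else 0),
   fun i => if (i : ℕ) = blk a ∨ (i : ℕ) = blk b then 0 else 1)

/-- The rational vector `w_e ∈ ℚ^d ⊕ ℚ^n` associated to the edge `e = {a,b}`. -/
def wvecQ (n d : ℕ) (blk : Fin d → ℕ) (a b : Fin d) : (Fin d → ℚ) × (Fin n → ℚ) :=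
  (fun k => (if k = a then 1 else 0) + (if k = b then 1 else 0),
   fun i => if (i : ℕ) = blk a ∨ (i : ℕ) = blk b then 0 else 1)


def wgen (R : Type*) [CommRing R] (n d : ℕ) (blk : Fin d → ℕ) (a b : Fin d) :
    (Fin d → R) × (Fin n → R) :=
  (fun k => (if k = a then 1 else 0) + (if k = b then 1 else 0),
   fun i => if (i : ℕ) = blk a ∨ (i : ℕ) = blk b then 0 else 1)

def Gv (R : Type*) [CommRing R] (n d : ℕ) (blk : Fin d → ℕ) (a : Fin d) :
    (Fin d → R) × (Fin n → R) :=
  (fun k => if k = a then 1 else 0, fun i => if (i : ℕ) = blk a then -1 else 0)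

def cv (R : Type*) [CommRing R] (n d : ℕ) : (Fin d → R) × (Fin n → R) :=
  (0, fun _ => 1)

lemma wgen_decomp (R : Type*) [CommRing R] (n d : ℕ) (blk : Fin d → ℕ) (a b : Fin d)
    (h : blk a ≠ blk b) :
    wgen R n d blk a b = Gv R n d blk a + Gv R n d blk b + cv R n d := by
  unfold wgen Gv cv
  refine Prod.ext ?_ ?_
  · funext x; simp [Prod.fst]
  · funext i
    show _ = _ + _ + (1 : R)
    by_cases h1 : (i : ℕ) = blk a <;> by_cases h2 : (i : ℕ) = blk b
    · exact absurd (h1.symm.trans h2) h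
    all_goals simp [h1, h2, h, (Ne.symm h)]

section alt
variable {R : Type*} [CommRing R] {M : Type*} [AddCommGroup M] [Module R M]

lemma alt_path_sum (G : ℕ → M) (c : M) (w : ℕ → M) :
    ∀ m, (∀ j < m, w j = G j + G (j + 1) + c) →
    ∑ j ∈ Finset.range m, ((-1 : R) ^ (j + 1)) • w j
      = -G 0 + ((-1 : R) ^ m) • G m + (if Even m then 0 else -c) := by
  intro m
  induction m with
  | zero => intro _; simp
  | succ m ih =>
    intro hw
    rw [Finset.sum_range_succ, ih (fun j hj => hw j (by omega)), hw m (by omega)]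
    rcases Nat.even_or_odd m with he | ho
    · rw [if_pos he, if_neg (by simp [Nat.even_add_one, he]), he.neg_one_pow,
        (by simp [pow_succ, he.neg_one_pow] : ((-1:R)^(m+1)) = -1)]
      simp only [one_smul, neg_smul, smul_add]
      abel
    · rw [if_neg (by simp [Nat.not_even_iff_odd.mpr ho]),
        if_pos (by simp [Nat.even_add_one, Nat.not_even_iff_odd.mpr ho]),
        ho.neg_one_pow, (by simp [pow_succ, ho.neg_one_pow] : ((-1:R)^(m+1)) = 1)]
      simp only [one_smul, neg_smul, smul_add, neg_one_smul]
      abel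

lemma alt_cycle_sum (G : ℕ → M) (c : M) (w : ℕ → M) (k : ℕ)
    (hw : ∀ i < 2 * k, w i = G i + G (i + 1) + c)
    (hlast : w (2 * k) = G (2 * k) + G 0 + c) :
    ∑ i ∈ Finset.range (2 * k + 1), ((-1 : R) ^ (i + 1)) • w i
      = -G 0 - G 0 - c := by
  rw [Finset.sum_range_succ, alt_path_sum G c w (2 * k) hw, hlast]
  have he : Even (2 * k) := ⟨k, by ring⟩
  rw [if_pos he, he.neg_one_pow, (by simp [pow_succ, he.neg_one_pow] : ((-1:R)^(2*k+1)) = -1)]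
  simp only [one_smul, neg_smul, smul_add, neg_one_smul]
  abel
end alt

lemma cycle_sum (R : Type*) [CommRing R] (n d : ℕ) (blk : Fin d → ℕ) (k : ℕ) (u : ℕ → Fin d)
    (hucyc : ∀ i < 2 * k + 1, blk (u i) ≠ blk (u ((i + 1) % (2 * k + 1)))) :
    ∑ i ∈ Finset.range (2 * k + 1),
        ((-1 : R) ^ (i + 1)) • wgen R n d blk (u i) (u ((i + 1) % (2 * k + 1)))
      = -Gv R n d blk (u 0) - Gv R n d blk (u 0) - cv R n d := by
  apply alt_cycle_sum (fun i => Gv R n d blk (u i)) (cv R n d) _ k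
  · intro i hi
    have hmod : (i + 1) % (2 * k + 1) = i + 1 := Nat.mod_eq_of_lt (by omega)
    have h := hucyc i (by omega)
    rw [hmod] at h ⊢
    exact wgen_decomp R n d blk _ _ h
  · have hmod : (2 * k + 1) % (2 * k + 1) = 0 := Nat.mod_self _
    have h := hucyc (2 * k) (by omega)
    rw [show 2 * k + 1 = (2 * k) + 1 from rfl] at hmod
    rw [hmod] at h
    simpa [hmod] using wgen_decomp R n d blk (u (2 * k)) (u 0) h

lemma path_sum (R : Type*) [CommRing R] (n d : ℕ) (blk : Fin d → ℕ) (m : ℕ) (q : ℕ → Fin d)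
    (hqpath : ∀ j < m, blk (q j) ≠ blk (q (j + 1))) :
    ∑ j ∈ Finset.range m, ((-1 : R) ^ (j + 1)) • wgen R n d blk (q j) (q (j + 1))
      = -Gv R n d blk (q 0) + ((-1 : R) ^ m) • Gv R n d blk (q m)
        + (if Even m then 0 else -cv R n d) :=
  alt_path_sum (fun j => Gv R n d blk (q j)) (cv R n d) _ m
    (fun j hj => wgen_decomp R n d blk _ _ (hqpath j hj))

lemma key (R : Type*) [CommRing R] (n d : ℕ) (blk : Fin d → ℕ)
    (k k' m : ℕ) (u u' q : ℕ → Fin d)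
    (hucyc : ∀ i < 2 * k + 1, blk (u i) ≠ blk (u ((i + 1) % (2 * k + 1))))
    (hu'cyc : ∀ i < 2 * k' + 1, blk (u' i) ≠ blk (u' ((i + 1) % (2 * k' + 1))))
    (hq0 : q 0 = u 0) (hqm : q m = u' 0)
    (hqpath : ∀ j < m, blk (q j) ≠ blk (q (j + 1))) :
    (Even m →
      ∑ i ∈ Finset.range (2 * k + 1),
          ((-1 : R) ^ (i + 1)) • wgen R n d blk (u i) (u ((i + 1) % (2 * k + 1)))
        - ∑ i ∈ Finset.range (2 * k' + 1),
          ((-1 : R) ^ (i + 1)) • wgen R n d blk (u' i) (u' ((i + 1) % (2 * k' + 1)))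
        - 2 • ∑ j ∈ Finset.range m,
          ((-1 : R) ^ (j + 1)) • wgen R n d blk (q j) (q (j + 1)) = 0) ∧
    (Odd m →
      ∑ i ∈ Finset.range (2 * k + 1),
          ((-1 : R) ^ (i + 1)) • wgen R n d blk (u i) (u ((i + 1) % (2 * k + 1)))
        + ∑ i ∈ Finset.range (2 * k' + 1),
          ((-1 : R) ^ (i + 1)) • wgen R n d blk (u' i) (u' ((i + 1) % (2 * k' + 1)))
        - 2 • ∑ j ∈ Finset.range m,
          ((-1 : R) ^ (j + 1)) • wgen R n d blk (q j) (q (j + 1)) = 0) := by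
  rw [cycle_sum R n d blk k u hucyc, cycle_sum R n d blk k' u' hu'cyc,
    path_sum R n d blk m q hqpath, hq0, hqm]
  constructor
  · intro he
    rw [if_pos he, he.neg_one_pow]
    simp only [one_smul, add_zero, smul_add, smul_neg, two_smul]
    abel
  · intro ho
    rw [if_neg (by simp [Nat.not_even_iff_odd.mpr ho]), ho.neg_one_pow]
    simp only [neg_one_smul, smul_add, smul_neg, two_smul]
    abel

lemma wvec_eq : wvec = wgen ℤ := rfl
lemma wvecQ_eq : wvecQ = wgen ℚ := rfl

/-- Two vertex-disjoint odd cycles `C : u_0,…,u_{2k}` and `C' : u'_0,…,u'_{2k'}` in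
`K_{r_1,…,r_n}` joined by a path `q_0 = u_0, q_1, …, q_m = u'_0` whose interior vertices
lie on neither cycle satisfy: if `m` is even then
`Σ(-1)^i w_{e_i} - Σ(-1)^i w_{e'_i} - 2Σ(-1)^j w_{f_j} = 0`, and if `m` is odd then
`Σ(-1)^i w_{e_i} + Σ(-1)^i w_{e'_i} - 2Σ(-1)^j w_{f_j} = 0`; in particular the vectors
`w_{e_i}, w_{e'_i}, w_{f_j}` are linearly dependent. -/
theorem stmt_4 (n : ℕ) (hn : 1 ≤ n) (r : ℕ → ℕ)
    (hr1 : ∀ i < n, 1 ≤ r i)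
    (hmono : ∀ i j, i ≤ j → j < n → r i ≤ r j)
    (d : ℕ) (hd : d = ∑ i ∈ Finset.range n, r i)
    (blk : Fin d → ℕ) (hblkn : ∀ a, blk a < n)
    (hcard : ∀ i < n, (Finset.univ.filter (fun a : Fin d => blk a = i)).card = r i)
    (k k' m : ℕ) (hk : 1 ≤ k) (hk' : 1 ≤ k') (hm : 1 ≤ m)
    (u u' q : ℕ → Fin d)
    (huinj : ∀ i < 2 * k + 1, ∀ j < 2 * k + 1, u i = u j → i = j)
    (hucyc : ∀ i < 2 * k + 1, blk (u i) ≠ blk (u ((i + 1) % (2 * k + 1))))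
    (hu'inj : ∀ i < 2 * k' + 1, ∀ j < 2 * k' + 1, u' i = u' j → i = j)
    (hu'cyc : ∀ i < 2 * k' + 1, blk (u' i) ≠ blk (u' ((i + 1) % (2 * k' + 1))))
    (hdisj : ∀ i < 2 * k + 1, ∀ j < 2 * k' + 1, u i ≠ u' j)
    (hq0 : q 0 = u 0) (hqm : q m = u' 0)
    (hqinj : ∀ i ≤ m, ∀ j ≤ m, q i = q j → i = j)
    (hqpath : ∀ j < m, blk (q j) ≠ blk (q (j + 1)))
    (hqint : ∀ j, 0 < j → j < m →
      (∀ i < 2 * k + 1, q j ≠ u i) ∧ (∀ i < 2 * k' + 1, q j ≠ u' i)) :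
    ((Even m →
      ∑ i ∈ Finset.range (2 * k + 1),
          ((-1 : ℤ) ^ (i + 1)) • wvec n d blk (u i) (u ((i + 1) % (2 * k + 1)))
        - ∑ i ∈ Finset.range (2 * k' + 1),
          ((-1 : ℤ) ^ (i + 1)) • wvec n d blk (u' i) (u' ((i + 1) % (2 * k' + 1)))
        - 2 • ∑ j ∈ Finset.range m,
          ((-1 : ℤ) ^ (j + 1)) • wvec n d blk (q j) (q (j + 1)) = 0) ∧
     (Odd m →
      ∑ i ∈ Finset.range (2 * k + 1),
          ((-1 : ℤ) ^ (i + 1)) • wvec n d blk (u i) (u ((i + 1) % (2 * k + 1)))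
        + ∑ i ∈ Finset.range (2 * k' + 1),
          ((-1 : ℤ) ^ (i + 1)) • wvec n d blk (u' i) (u' ((i + 1) % (2 * k' + 1)))
        - 2 • ∑ j ∈ Finset.range m,
          ((-1 : ℤ) ^ (j + 1)) • wvec n d blk (q j) (q (j + 1)) = 0)) ∧
    ¬ LinearIndependent ℚ
      (Sum.elim
        (Sum.elim
          (fun i : Fin (2 * k + 1) =>
            wvecQ n d blk (u (i : ℕ)) (u (((i : ℕ) + 1) % (2 * k + 1))))
          (fun i : Fin (2 * k' + 1) =>
            wvecQ n d blk (u' (i : ℕ)) (u' (((i : ℕ) + 1) % (2 * k' + 1)))))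
        (fun j : Fin m => wvecQ n d blk (q (j : ℕ)) (q ((j : ℕ) + 1)))) := by
  
  constructor
  · rw [wvec_eq]
    exact key ℤ n d blk k k' m u u' q hucyc hu'cyc hq0 hqm hqpath
  · rw [Fintype.not_linearIndependent_iff]
    refine ⟨Sum.elim (Sum.elim (fun i : Fin (2 * k + 1) => (-1 : ℚ) ^ ((i : ℕ) + 1))
        (fun i : Fin (2 * k' + 1) =>
          (if Even m then (-1 : ℚ) else 1) * (-1 : ℚ) ^ ((i : ℕ) + 1)))
        (fun j : Fin m => (-2 : ℚ) * (-1 : ℚ) ^ ((j : ℕ) + 1)), ?_,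
      ⟨Sum.inl (Sum.inl ⟨0, by omega⟩), by simp⟩⟩
    rw [wvecQ_eq, Fintype.sum_sum_type, Fintype.sum_sum_type]
    simp only [Sum.elim_inl, Sum.elim_inr, mul_smul]
    rw [← Finset.smul_sum, ← Finset.smul_sum,
      Fin.sum_univ_eq_sum_range (fun i =>
        ((-1 : ℚ) ^ (i + 1)) • wgen ℚ n d blk (u i) (u ((i + 1) % (2 * k + 1)))),
      Fin.sum_univ_eq_sum_range (fun i =>
        ((-1 : ℚ) ^ (i + 1)) • wgen ℚ n d blk (u' i) (u' ((i + 1) % (2 * k' + 1)))),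
      Fin.sum_univ_eq_sum_range (fun j =>
        ((-1 : ℚ) ^ (j + 1)) • wgen ℚ n d blk (q j) (q (j + 1))),
      cycle_sum ℚ n d blk k u hucyc, cycle_sum ℚ n d blk k' u' hu'cyc,
      path_sum ℚ n d blk m q hqpath, hq0, hqm]
    rcases Nat.even_or_odd m with he | ho
    · rw [if_pos he, if_pos he, he.neg_one_pow]
      simp only [one_smul, add_zero, smul_add, smul_neg, neg_one_smul, neg_smul]
      rw [show ((2 : ℚ)) = 1 + 1 from by norm_num]
      simp only [add_smul, one_smul, smul_add, smul_neg]
      abel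
    · rw [if_neg (by simp [Nat.not_even_iff_odd.mpr ho]),
        if_neg (by simp [Nat.not_even_iff_odd.mpr ho]), ho.neg_one_pow]
      simp only [one_smul, neg_one_smul, smul_add, smul_neg, neg_smul]
      rw [show ((2 : ℚ)) = 1 + 1 from by norm_num]
      simp only [add_smul, one_smul, smul_add, smul_neg]
      abel
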